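/- arXiv:2106.08496 — 7 statements merged into one kernel-verified Lean document; each statement's English description precedes it below -/
import Mathlib

section
/- Suppose g : [0,T] → ℝ is continuous, g(0) ≥ 0, and for all s ∈ [0,T], v(s,s)·g(s) = c'(s) - ∫₀ˢ v'(s,y) g(y) dy, where v(s,s) > 0, c'(s) > 0 for s > 0, and |v'(s,y)| < c'(s) for all s > 0 and y ∈ [0,s]. If s⋆ ∈ (0,T] satisfies ∫₀^{s⋆} |g(y)| dy ≤ 1 and g(y) ≥ 0 for all y ∈ [0,s⋆], then g(s⋆) > 0. -/
open Set MeasureTheory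

/-- Positivity of the solution of the equilibrium Volterra equation (key step of
Lemma 2): if `g` is nonnegative with total mass at most one up to `sstar`, then
`g sstar > 0`. -/
theorem density_positive (T : ℝ) (hT : 0 < T)
    (v v' : ℝ → ℝ → ℝ) (c' g : ℝ → ℝ)
    (hvc : ContinuousOn (fun p : ℝ × ℝ => v p.1 p.2) (Icc 0 T ×ˢ Icc 0 T))
    (hv'c : ContinuousOn (fun p : ℝ × ℝ => v' p.1 p.2) (Icc 0 T ×ˢ Icc 0 T))
    (hc'c : ContinuousOn c' (Icc 0 T))
    (hgc : ContinuousOn g (Icc 0 T))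
    (hg0 : 0 ≤ g 0)
    (heq : ∀ s ∈ Icc (0:ℝ) T, v s s * g s = c' s - ∫ y in (0:ℝ)..s, v' s y * g y)
    (hv : ∀ s ∈ Icc (0:ℝ) T, 0 < v s s)
    (hc' : ∀ s ∈ Ioc (0:ℝ) T, 0 < c' s)
    (hdom : ∀ s ∈ Ioc (0:ℝ) T, ∀ y ∈ Icc (0:ℝ) s, |v' s y| < c' s)
    (sstar : ℝ) (hs : sstar ∈ Ioc (0:ℝ) T)
    (hmass : (∫ y in (0:ℝ)..sstar, |g y|) ≤ 1)
    (hnn : ∀ y ∈ Icc (0:ℝ) sstar, 0 ≤ g y) :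
    0 < g sstar := by
  have hsIcc : sstar ∈ Icc (0:ℝ) T := ⟨hs.1.le, hs.2⟩
  have hsub : Icc (0:ℝ) sstar ⊆ Icc 0 T := Icc_subset_Icc le_rfl hs.2
  -- continuity of y ↦ v' sstar y on [0, sstar]
  have hf : ContinuousOn (fun y => v' sstar y) (Icc 0 sstar) := by
    have : ContinuousOn (fun y : ℝ => ((sstar, y) : ℝ × ℝ)) (Icc 0 sstar) :=
      (continuous_const.prodMk continuous_id).continuousOn
    exact hv'c.comp this (fun y hy => ⟨hsIcc, hsub hy⟩)
  have hgc' : ContinuousOn g (Icc 0 sstar) := hgc.mono hsub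
  -- max of |v'| on the compact interval
  obtain ⟨y₀, hy₀, hmax⟩ := (isCompact_Icc).exists_isMaxOn
    (nonempty_Icc.2 hs.1.le) (hf.abs)
  set M : ℝ := |v' sstar y₀| with hM
  have hMlt : M < c' sstar := hdom sstar hs y₀ hy₀
  have hMnn : 0 ≤ M := abs_nonneg _
  -- integrability
  have huIcc : uIcc (0:ℝ) sstar = Icc 0 sstar := uIcc_of_le hs.1.le
  have hig : IntervalIntegrable g volume 0 sstar :=
    (hgc'.mono (by rw [huIcc])).intervalIntegrable
  have hifg : IntervalIntegrable (fun y => v' sstar y * g y) volume 0 sstar :=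
    ((hf.mul hgc').mono (by rw [huIcc])).intervalIntegrable
  have hiMg : IntervalIntegrable (fun y => M * g y) volume 0 sstar :=
    (continuous_const.continuousOn.mul (hgc'.mono (by rw [huIcc]))).intervalIntegrable
  -- ∫ g = ∫ |g| ≤ 1
  have hgeq : (∫ y in (0:ℝ)..sstar, g y) = ∫ y in (0:ℝ)..sstar, |g y| := by
    apply intervalIntegral.integral_congr
    intro y hy
    rw [huIcc] at hy
    exact (abs_of_nonneg (hnn y hy)).symm
  have hgle1 : (∫ y in (0:ℝ)..sstar, g y) ≤ 1 := hgeq ▸ hmass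
  -- pointwise bound and integral bound
  have hbound : (∫ y in (0:ℝ)..sstar, v' sstar y * g y) ≤ M * ∫ y in (0:ℝ)..sstar, g y := by
    rw [← intervalIntegral.integral_const_mul]
    apply intervalIntegral.integral_mono_on hs.1.le hifg hiMg
    intro y hy
    have h1 : v' sstar y ≤ M := (le_abs_self _).trans (hmax hy)
    exact mul_le_mul_of_nonneg_right h1 (hnn y hy)
  have hint : (∫ y in (0:ℝ)..sstar, v' sstar y * g y) < c' sstar := by
    calc (∫ y in (0:ℝ)..sstar, v' sstar y * g y) ≤ M * ∫ y in (0:ℝ)..sstar, g y := hbound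
      _ ≤ M := by
          apply mul_le_of_le_one_right hMnn hgle1
      _ < c' sstar := hMlt
  have hvg : 0 < v sstar sstar * g sstar := by
    rw [heq sstar hsIcc]; linarith
  have hvpos := hv sstar hsIcc
  nlinarith [hvg, hvpos]
end

section
/- In the offensive/defensive balance model with parameters V > 0, c_a ≥ c_d > 0, δ_a > 0, the quantities s̄_d := V/(c_a + δ_a) and s̄_a := (V/δ_a)(1 - exp(-δ_a/c_d)) satisfy s̄_d < s̄_a. -/
/-- In the offensive/defensive balance model with `V > 0`, `c_a ≥ c_d > 0` and
`δ_a > 0`, the defender's cutoff exceeds the attacker's: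
`s̄_d = V/(ca + δa) < (V/δa)(1 - e^{-δa/cd}) = s̄_a`. -/
theorem defender_positive_payoff (V ca cd δa : ℝ)
    (hV : 0 < V) (hcd : 0 < cd) (hca : cd ≤ ca) (hδ : 0 < δa) :
    V / (ca + δa) < (V / δa) * (1 - Real.exp (-δa / cd)) := by
  have hca' : 0 < ca := lt_of_lt_of_le hcd hca
  have h1 : Real.exp (-δa / cd) ≤ Real.exp (-δa / ca) := by
    apply Real.exp_le_exp.2
    rw [div_le_div_iff₀ hcd hca']
    nlinarith
  have h2 : Real.exp (-δa / ca) < ca / (ca + δa) := by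
    rw [show -δa / ca = -(δa / ca) by ring, Real.exp_neg]
    rw [inv_lt_iff_one_lt_mul₀ (Real.exp_pos _)]
    have h3 : 1 + δa / ca < Real.exp (δa / ca) := by
      have := Real.add_one_lt_exp (x := δa / ca) (by positivity)
      linarith
    have h4 : (ca + δa) / ca = 1 + δa / ca := by field_simp
    calc 1 = ca / (ca + δa) * ((ca + δa) / ca) := by field_simp
    _ < ca / (ca + δa) * Real.exp (δa / ca) := by
        apply mul_lt_mul_of_pos_left _ (by positivity)
        rw [h4]; exact h3
  have hkey : δa / (ca + δa) < 1 - Real.exp (-δa / cd) := by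
    have : Real.exp (-δa / cd) < ca / (ca + δa) := lt_of_le_of_lt h1 h2
    have h5 : δa / (ca + δa) + ca / (ca + δa) = 1 := by field_simp; ring
    linarith
  rw [div_mul_eq_mul_div, lt_div_iff₀ hδ, div_mul_eq_mul_div, div_lt_iff₀ (by positivity)]
  calc V * δa = V * (δa / (ca + δa)) * (ca + δa) := by field_simp
  _ < V * (1 - Real.exp (-δa / cd)) * (ca + δa) := by
      apply mul_lt_mul_of_pos_right (mul_lt_mul_of_pos_left hkey hV) (by positivity)
end

section
/- For all c > 0 and δ > 0, (c/δ²)·(δ + c·log(c/(c+δ))) < 1/2. Consequently in the offensive/defensive model with c_a = c_d = c, the attacker's equilibrium winning probability (c/δ²)(δ + c·log(c/(c+δ))) is strictly less than 1/2. -/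
open Real Set

lemma log_one_add_gt (x : ℝ) (hx : 0 < x) : x - x^2/2 < Real.log (1+x) := by
  set f : ℝ → ℝ := fun y => Real.log (1+y) - y + y^2/2 with hf
  have hmono : StrictMonoOn f (Ici (0:ℝ)) := by
    apply strictMonoOn_of_deriv_pos (convex_Ici 0)
    · apply ContinuousOn.add
      · apply ContinuousOn.sub
        · apply ContinuousOn.log
          · exact (continuous_const.add continuous_id).continuousOn
          · intro y hy
            simp only [mem_Ici] at hy
            positivity
        · exact continuous_id.continuousOn
      · exact (continuous_pow 2).continuousOn.div_const 2
    · intro y hy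
      rw [interior_Ici] at hy
      simp only [mem_Ioi] at hy
      have h1 : (0:ℝ) < 1 + y := by linarith
      have hd : HasDerivAt f (1/(1+y) - 1 + y) y := by
        have hlog : HasDerivAt (fun z : ℝ => Real.log (1+z)) (1/(1+y)) y := by
          have : HasDerivAt (fun z : ℝ => 1 + z) 1 y := (hasDerivAt_id y).const_add 1
          simpa using this.log h1.ne'
        have hsq : HasDerivAt (fun z : ℝ => z^2/2) y y := by
          have : HasDerivAt (fun z : ℝ => z^2) (2*y) y := by
            simpa using hasDerivAt_pow 2 y
          simpa [mul_comm] using this.div_const 2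
        exact (hlog.sub (hasDerivAt_id y)).add hsq
      rw [hd.deriv]
      have : 1/(1+y) - 1 + y = y^2/(1+y) := by field_simp; ring
      rw [this]
      positivity
  have h0 : f 0 < f x := hmono (self_mem_Ici) (le_of_lt hx) hx
  simp only [hf, Real.log_one, add_zero] at h0
  norm_num at h0
  linarith
/-- The attacker's equilibrium winning probability in the offensive/defensive
balance model with equal costs `c_a = c_d = c` is strictly less than `1/2`:
for all `c > 0` and `δ > 0`, `(c/δ²)(δ + c log(c/(c+δ))) < 1/2`. -/
theorem attacker_prob_lt_half (c δ : ℝ) (hc : 0 < c) (hδ : 0 < δ) :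
    (c / δ^2) * (δ + c * Real.log (c / (c + δ))) < 1 / 2 := by
  have hcd : (0:ℝ) < c + δ := by linarith
  have hx : 0 < δ / c := div_pos hδ hc
  have hkey := log_one_add_gt (δ/c) hx
  have hrw : c / (c + δ) = (1 + δ/c)⁻¹ := by
    field_simp
  rw [hrw, Real.log_inv]
  have hlog : Real.log (1 + δ/c) > δ/c - (δ/c)^2/2 := hkey
  have h2 : δ + c * -Real.log (1 + δ/c) < δ^2/(2*c) := by
    have : c * Real.log (1 + δ/c) > c * (δ/c - (δ/c)^2/2) := by
      exact (mul_lt_mul_iff_right₀ hc).mpr hkey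
    have he : c * (δ/c - (δ/c)^2/2) = δ - δ^2/(2*c) := by
      field_simp
    nlinarith
  calc (c / δ^2) * (δ + c * -Real.log (1 + δ/c))
      < (c / δ^2) * (δ^2/(2*c)) := by
        apply mul_lt_mul_of_pos_left h2 (div_pos hc (pow_pos hδ 2))
    _ = 1/2 := by field_simp
end

section
/- Let V > 0, δ > 0, c_a, c_d > 0, and define G_a(s) = 1 + (c_d/δ)·log(c_a V / ((c_a+δ)(V - δ s))) and G_d(s) = c_a s/(V - δ s) on [0, s̄] where s̄ = V/(c_a + δ). Then for all s ∈ [0, s̄]: (i) ∫₀ˢ (V - δ s) dG_d(y) - c_a s = 0, and (ii) ∫₀ˢ (V - δ y) dG_a(y) - c_d s = (V - δ·0)·G_a(0), i.e. the defender's expected payoff is constant in s. -/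
open Set

/-- Indifference conditions in the offensive/defensive balance model.
The attacker's value from winning with score `s` is `V - δ s`; the defender's
value when the attacker bid `y` is `V - δ y`; costs are linear.  The defender
plays `G_d s = c_a s/(V - δ s)` (density `c_a V/(V - δ y)²`), and the attacker
plays `G_a s = 1 + (c_d/δ) log(c_a V/((c_a+δ)(V - δ s)))` with an atom
`G_a 0` at zero and density `c_d/(V - δ y)`.  Both players are indifferent on
`[0, s̄]` with `s̄ = V/(c_a + δ)`: the attacker's payoff is `0` and the
defender's payoff is the constant `(V - δ·0) · G_a 0`. -/
theorem war_model_indifference (V ca cd δ : ℝ)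
    (hV : 0 < V) (hca : 0 < ca) (hcd : 0 < cd) (hδ : 0 < δ) :
    let Ga : ℝ → ℝ := fun s => 1 + (cd / δ) * Real.log (ca * V / ((ca + δ) * (V - δ * s)))
    ∀ s ∈ Icc (0:ℝ) (V / (ca + δ)),
      ((∫ y in (0:ℝ)..s, (V - δ * s) * (ca * V / (V - δ * y)^2)) - ca * s = 0) ∧
      ((V - δ * 0) * Ga 0 + (∫ y in (0:ℝ)..s, (V - δ * y) * (cd / (V - δ * y))) - cd * s
          = (V - δ * 0) * Ga 0) := by
  intro Ga s hs
  obtain ⟨hs0, hs1⟩ := hs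
  have hcaδ : 0 < ca + δ := by linarith
  -- positivity of V - δ y on [0, s]
  have hpos : ∀ y ∈ Icc (0:ℝ) s, 0 < V - δ * y := by
    intro y hy
    have h1 : y ≤ V / (ca + δ) := le_trans hy.2 hs1
    have h2 : δ * y ≤ δ * (V / (ca + δ)) := by nlinarith [hy.1]
    have h3 : δ * (V / (ca + δ)) < V := by
      rw [← mul_div_assoc, div_lt_iff₀ hcaδ]
      nlinarith
    linarith
  have hposs : 0 < V - δ * s := hpos s ⟨hs0, le_refl s⟩
  constructor
  · -- first integral
    have key : (∫ y in (0:ℝ)..s, ca * V / (V - δ * y)^2)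
        = ca * V / (δ * (V - δ * s)) - ca * V / (δ * (V - δ * 0)) := by
      apply intervalIntegral.integral_eq_sub_of_hasDerivAt
      · intro y hy
        rw [uIcc_of_le hs0] at hy
        have hy0 : 0 < V - δ * y := hpos y hy
        have hne : δ * (V - δ * y) ≠ 0 := by positivity
        have hden : HasDerivAt (fun y => δ * (V - δ * y)) (δ * -δ) y := by
          have := (((hasDerivAt_id y).const_mul δ).const_sub V).const_mul δ
          simpa using this
        have := (hasDerivAt_const y (ca * V)).div hden hne
        refine this.congr_deriv ?_
        rw [div_eq_div_iff (pow_ne_zero 2 hne) (pow_ne_zero 2 hy0.ne')]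
        ring
      · apply ContinuousOn.intervalIntegrable
        rw [uIcc_of_le hs0]
        apply ContinuousOn.div continuousOn_const
        · fun_prop
        · intro y hy
          have := hpos y hy
          positivity
    rw [intervalIntegral.integral_const_mul, key]
    have h0 : V - δ * 0 = V := by ring
    rw [h0]
    field_simp
    ring
  · -- second integral: integrand = cd on [0,s]
    have key : (∫ y in (0:ℝ)..s, (V - δ * y) * (cd / (V - δ * y))) = cd * s := by
      have : (∫ y in (0:ℝ)..s, (V - δ * y) * (cd / (V - δ * y)))
          = ∫ y in (0:ℝ)..s, cd := by
        apply intervalIntegral.integral_congr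
        intro y hy
        rw [uIcc_of_le hs0] at hy
        have := hpos y hy
        field_simp
      rw [this, intervalIntegral.integral_const, smul_eq_mul]
      ring
    rw [key]
    ring
end

section
/- Let ω ∈ (0, 1/2), v(s,y) = ω(1 - (s-y)²/2), and c(s) = s - s²/2 for s ∈ [0,1]. Then g(y) = e^{-y}/ω satisfies ∫₀ˢ v(s,y) g(y) dy = c(s) for all s ∈ [0, -log(1-ω)]. -/
open Set

/-- Closed-form exponential equilibrium density in the all-pay contest with
winner's regret: with value `v(s,y) = ω(1 - (s-y)²/2)` and cost
`c(s) = s - s²/2`, the density `g(y) = e^{-y}/ω` satisfies the indifference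
condition `∫₀ˢ v(s,y) g(y) dy = c(s)` on `[0, -log(1-ω)]`. -/
theorem winners_regret_density (ω : ℝ) (hω : ω ∈ Ioo (0:ℝ) (1/2)) :
    ∀ s ∈ Icc (0:ℝ) (-Real.log (1 - ω)),
      (∫ y in (0:ℝ)..s, (ω * (1 - (s - y)^2 / 2)) * (Real.exp (-y) / ω))
        = s - s^2 / 2 := by
  intro s _
  have hωne : ω ≠ 0 := ne_of_gt hω.1
  have h1 : EqOn (fun y => ω * (1 - (s - y)^2 / 2) * (Real.exp (-y) / ω))
      (fun y => (1 - (s - y)^2 / 2) * Real.exp (-y)) (uIcc 0 s) := by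
    intro y _
    field_simp
  rw [intervalIntegral.integral_congr h1]
  have key : ∀ y ∈ uIcc (0:ℝ) s,
      HasDerivAt (fun y => Real.exp (-y) * (s^2/2 - s + (1-s)*y + y^2/2))
        ((1 - (s - y)^2 / 2) * Real.exp (-y)) y := by
    intro y _
    have he : HasDerivAt (fun y : ℝ => Real.exp (-y)) (-Real.exp (-y)) y := by
      simpa [Function.comp_def] using (Real.hasDerivAt_exp (-y)).comp y (hasDerivAt_neg y)
    have hp : HasDerivAt (fun y : ℝ => s^2/2 - s + (1-s)*y + y^2/2)
        (0 + (1-s) * 1 + 2 * y / 2) y := by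
      have h1 : HasDerivAt (fun y : ℝ => (1-s)*y) ((1-s) * 1) y :=
        (hasDerivAt_id y).const_mul (1-s)
      have h2 : HasDerivAt (fun y : ℝ => y^2/2) (2 * y / 2) y := by
        simpa using ((hasDerivAt_pow 2 y).div_const 2)
      exact ((hasDerivAt_const y (s^2/2 - s)).add h1).add h2
    have : HasDerivAt (fun y => Real.exp (-y) * (s^2/2 - s + (1-s)*y + y^2/2)) _ y := he.mul hp
    convert this using 1
    ring
  have hint : IntervalIntegrable (fun y => (1 - (s - y)^2 / 2) * Real.exp (-y))
      MeasureTheory.volume 0 s := by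
    apply Continuous.intervalIntegrable
    continuity
  rw [intervalIntegral.integral_eq_sub_of_hasDerivAt key hint]
  have hz : s^2/2 - s + (1-s)*s + s^2/2 = 0 := by ring
  simp [hz]
end

section
/- For all ω ∈ (0,1), the quantity 1 + ((1-ω)/ω)·log(1-ω) is strictly positive and strictly increasing in ω. -/
open Set

lemma mean_score_hasDeriv {ω : ℝ} (h0 : 0 < ω) (h1 : ω < 1) :
    HasDerivAt (fun ω : ℝ => 1 + ((1 - ω) / ω) * Real.log (1 - ω))
      (-Real.log (1 - ω) / ω ^ 2 - 1 / ω) ω := by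
  have hω : ω ≠ 0 := ne_of_gt h0
  have h1ω : (1 : ℝ) - ω ≠ 0 := by linarith
  have hq : HasDerivAt (fun ω : ℝ => (1 - ω) / ω)
      ((-1 * ω - (1 - ω) * 1) / ω ^ 2) ω := by
    exact (((hasDerivAt_id ω).const_sub 1)).div (hasDerivAt_id ω) hω
  have hl : HasDerivAt (fun ω : ℝ => Real.log (1 - ω)) (-1 / (1 - ω)) ω :=
    ((hasDerivAt_id ω).const_sub 1).log h1ω
  have := (hq.mul hl).const_add (1 : ℝ)
  refine this.congr_deriv ?_
  field_simp
  ring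

/-- The expected-score expression `1 + ((1-ω)/ω) log(1-ω)` is strictly positive
and strictly increasing in `ω` on `(0,1)`. -/
theorem mean_score_pos_and_mono :
    (∀ ω ∈ Ioo (0:ℝ) 1, 0 < 1 + ((1 - ω) / ω) * Real.log (1 - ω)) ∧
    StrictMonoOn (fun ω : ℝ => 1 + ((1 - ω) / ω) * Real.log (1 - ω)) (Ioo (0:ℝ) 1) := by
  constructor
  · intro ω hω
    obtain ⟨h0, h1⟩ := hω
    have h1ω : (0:ℝ) < 1 - ω := by linarith
    -- log(1/(1-ω)) < 1/(1-ω) - 1, i.e. -log(1-ω) < ω/(1-ω)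
    have key : Real.log ((1 - ω)⁻¹) < (1 - ω)⁻¹ - 1 :=
      Real.log_lt_sub_one_of_pos (by positivity) (by
        intro h
        have : (1:ℝ) - ω = 1 := by
          field_simp at h; linarith
        linarith)
    rw [Real.log_inv] at key
    -- so log(1-ω) > 1 - 1/(1-ω) = -ω/(1-ω)
    have hlog : -(ω / (1 - ω)) < Real.log (1 - ω) := by
      have : (1 - ω)⁻¹ - 1 = ω / (1 - ω) := by field_simp; ring
      rw [this] at key
      linarith
    have hfrac : (0:ℝ) < (1 - ω) / ω := by positivity
    have := mul_lt_mul_of_pos_left hlog hfrac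
    have heq : (1 - ω) / ω * (-(ω / (1 - ω))) = -1 := by
      field_simp
    linarith [heq ▸ this]
  · apply strictMonoOn_of_deriv_pos (convex_Ioo 0 1)
    · apply ContinuousOn.add continuousOn_const
      apply ContinuousOn.mul
      · exact (continuousOn_const.sub continuousOn_id).div continuousOn_id
          (fun x hx => ne_of_gt hx.1)
      · apply ContinuousOn.log (continuousOn_const.sub continuousOn_id)
        intro x hx
        have : x < 1 := hx.2
        intro h; simp at h; linarith
    · intro x hx
      rw [interior_Ioo] at hx
      obtain ⟨h0, h1⟩ := hx
      rw [(mean_score_hasDeriv h0 h1).deriv]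
      have hlog : Real.log (1 - x) < -x := by
        have := Real.log_lt_sub_one_of_pos (show (0:ℝ) < 1 - x by linarith)
          (by intro h; linarith)
        linarith
      have hx2 : (0:ℝ) < x ^ 2 := by positivity
      rw [sub_pos, div_lt_div_iff₀ h0 hx2]
      nlinarith
end

section
/- Suppose two players play mixed strategies with CDFs G₁, G₂ on [0,∞) in an all-pay contest where the payoff to player i from score s against opponent score y is vᵢ(s,y)·1[s > y] - cᵢ(s), with vᵢ continuous, vᵢ(s,s) > 0 for all s, and cᵢ continuous strictly increasing. Then in any Nash equilibrium, G₁ and G₂ cannot both have an atom at the same point t ≥ 0. -/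
open Set MeasureTheory

/-- In a two-player all-pay contest with payoff `vᵢ(s,y)·1[s>y] - cᵢ(s)`,
`vᵢ` continuous and positive on the diagonal and `cᵢ` continuous strictly
increasing, the two equilibrium mixed strategies cannot both place an atom at
the same point `t ≥ 0`.  Equilibrium is encoded by the Nash requirement that
every point in the support of a player's strategy (in particular every atom)
is a best response among scores in `[0,∞)`. -/
theorem no_common_atom
    (v₁ v₂ : ℝ → ℝ → ℝ) (c₁ c₂ : ℝ → ℝ)
    (hv₁ : Continuous (fun p : ℝ × ℝ => v₁ p.1 p.2))
    (hv₂ : Continuous (fun p : ℝ × ℝ => v₂ p.1 p.2))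
    (hv₁d : ∀ s : ℝ, 0 ≤ s → 0 < v₁ s s) (hv₂d : ∀ s : ℝ, 0 ≤ s → 0 < v₂ s s)
    (hc₁ : Continuous c₁) (hc₂ : Continuous c₂)
    (hc₁m : StrictMono c₁) (hc₂m : StrictMono c₂)
    (μ₁ μ₂ : Measure ℝ) [IsProbabilityMeasure μ₁] [IsProbabilityMeasure μ₂]
    (hμ₁supp : μ₁ (Iio 0) = 0) (hμ₂supp : μ₂ (Iio 0) = 0)
    (hint₁ : ∀ s : ℝ, Integrable (fun y => v₁ s y) μ₂)
    (hint₂ : ∀ s : ℝ, Integrable (fun y => v₂ s y) μ₁)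
    (U₁ U₂ : ℝ → ℝ)
    (hU₁ : ∀ s : ℝ, U₁ s = (∫ y, (if y < s then v₁ s y else 0) ∂μ₂) - c₁ s)
    (hU₂ : ∀ s : ℝ, U₂ s = (∫ y, (if y < s then v₂ s y else 0) ∂μ₁) - c₂ s)
    (hbr₁ : ∀ s : ℝ, 0 < μ₁ {s} → ∀ t : ℝ, 0 ≤ t → U₁ t ≤ U₁ s)
    (hbr₂ : ∀ s : ℝ, 0 < μ₂ {s} → ∀ t : ℝ, 0 ≤ t → U₂ t ≤ U₂ s)
    (t : ℝ) (ht : 0 ≤ t) :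
    ¬(0 < μ₁ {t} ∧ 0 < μ₂ {t}) := by

  rintro ⟨h1, h2⟩
  -- the atom mass of player 2 at t
  set m : ℝ := (μ₂ {t}).toReal with hm
  have hmpos : 0 < m := ENNReal.toReal_pos h2.ne' (measure_lt_top μ₂ _).ne
  -- sequence of deviations s n → t from above
  set s : ℕ → ℝ := fun n => t + 1 / (n + 1 : ℝ) with hs
  have hspos : ∀ n : ℕ, (0:ℝ) < 1 / (n + 1 : ℝ) := by
    intro n; positivity
  have hsle : ∀ n : ℕ, (1 : ℝ) / (n + 1 : ℝ) ≤ 1 := by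
    intro n
    rw [div_le_one (by positivity)]
    linarith [Nat.cast_nonneg (α := ℝ) n]
  have hst : Filter.Tendsto s Filter.atTop (nhds t) := by
    have := (tendsto_one_div_add_atTop_nhds_zero_nat :
      Filter.Tendsto (fun n : ℕ => 1 / ((n : ℝ) + 1)) Filter.atTop (nhds 0))
    have h := this.const_add t
    simpa [hs, one_div] using h
  -- bound on v₁ on a compact rectangle
  have hcomp : IsCompact ((Icc t (t+1)) ×ˢ (Icc 0 (t+1))) :=
    isCompact_Icc.prod isCompact_Icc
  obtain ⟨M, hM⟩ := hcomp.exists_bound_of_continuousOn hv₁.continuousOn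
  have hMtt : ‖v₁ t t‖ ≤ M := by
    have := hM (t, t) ⟨⟨le_refl t, by linarith⟩, ⟨ht, by linarith⟩⟩
    simpa using this
  have hM0 : 0 ≤ M := le_trans (norm_nonneg _) hMtt
  -- the functions
  set F : ℕ → ℝ → ℝ := fun n y => if y < s n then v₁ (s n) y else 0 with hF
  set f : ℝ → ℝ := fun y => if y < t then v₁ t y else 0 with hf
  set g : ℝ → ℝ := fun y => if y ≤ t then v₁ t y else 0 with hg
  have hfI : Integrable f μ₂ := by
    have : f = (Iio t).indicator (fun y => v₁ t y) := by
      funext y; simp [hf, Set.indicator_apply, Set.mem_Iio]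
    rw [this]
    exact (hint₁ t).indicator measurableSet_Iio
  have hgeq : g = fun y => f y + ({t} : Set ℝ).indicator (fun _ => v₁ t t) y := by
    funext y
    rcases lt_trichotomy y t with h | h | h
    · simp [hf, hg, h, h.le, Set.indicator_apply, h.ne]
    · subst h; simp [hf, hg, Set.indicator_apply]
    · simp [hf, hg, not_lt.mpr h.le, not_le.mpr h, Set.indicator_apply, h.ne']
  have hindI : Integrable (({t} : Set ℝ).indicator (fun _ => v₁ t t)) μ₂ :=
    (integrable_const (v₁ t t)).indicator (measurableSet_singleton t)
  have hgI : Integrable g μ₂ := by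
    rw [hgeq]; exact hfI.add hindI
  have hgint : ∫ y, g y ∂μ₂ = (∫ y, f y ∂μ₂) + v₁ t t * m := by
    rw [hgeq, integral_add hfI hindI]
    congr 1
    rw [integral_indicator_const _ (measurableSet_singleton t)]
    simp [hm, mul_comm, Measure.real]
  -- a.e. nonnegativity of y
  have hae : ∀ᵐ y ∂μ₂, 0 ≤ y := by
    rw [MeasureTheory.ae_iff]
    have : {y : ℝ | ¬ 0 ≤ y} = Iio 0 := by ext y; simp [Set.mem_Iio, not_le]
    rw [this]; exact hμ₂supp
  -- dominated convergence
  have hFI : ∀ n, Integrable (F n) μ₂ := by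
    intro n
    have : F n = (Iio (s n)).indicator (fun y => v₁ (s n) y) := by
      funext y; simp [hF, Set.indicator_apply, Set.mem_Iio]
    rw [this]
    exact (hint₁ (s n)).indicator measurableSet_Iio
  have hmeas : ∀ n, AEStronglyMeasurable (F n) μ₂ := fun n => (hFI n).aestronglyMeasurable
  have hbound : ∀ n, ∀ᵐ y ∂μ₂, ‖F n y‖ ≤ M := by
    intro n
    filter_upwards [hae] with y hy
    by_cases hyn : y < s n
    · have h1 : s n ∈ Icc t (t+1) := ⟨by simp only [hs]; linarith [hspos n], by
        simp only [hs]; linarith [hsle n]⟩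
      have h2 : y ∈ Icc 0 (t+1) := ⟨hy, by
        have := hsle n
        simp only [hs] at hyn
        linarith⟩
      have := hM (s n, y) ⟨h1, h2⟩
      simpa [hF, hyn] using this
    · simp [hF, hyn, hM0]
  have hlim : ∀ᵐ y ∂μ₂, Filter.Tendsto (fun n => F n y) Filter.atTop (nhds (g y)) := by
    filter_upwards with y
    by_cases hyt : y ≤ t
    · have hev : ∀ n, F n y = v₁ (s n) y := by
        intro n
        have : y < s n := lt_of_le_of_lt hyt (by simp only [hs]; linarith [hspos n])
        simp [hF, this]
      have : Filter.Tendsto (fun n => v₁ (s n) y) Filter.atTop (nhds (v₁ t y)) := by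
        have hp : Filter.Tendsto (fun n => ((s n, y) : ℝ × ℝ)) Filter.atTop (nhds (t, y)) :=
          hst.prodMk_nhds tendsto_const_nhds
        exact (hv₁.tendsto (t, y)).comp hp
      simp only [hg, if_pos hyt]
      exact this.congr (fun n => (hev n).symm)
    · push_neg at hyt
      have hev : ∀ᶠ n in Filter.atTop, F n y = 0 := by
        have : ∀ᶠ n in Filter.atTop, s n < y := by
          have := hst.eventually (eventually_lt_nhds hyt)
          exact this
        filter_upwards [this] with n hn
        simp [hF, not_lt.mpr hn.le]
      simp only [hg, if_neg (not_le.mpr hyt)]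
      exact Filter.Tendsto.congr' (hev.mono fun n h => h.symm) tendsto_const_nhds
  have hkey : Filter.Tendsto (fun n => ∫ y, F n y ∂μ₂) Filter.atTop (nhds (∫ y, g y ∂μ₂)) :=
    tendsto_integral_of_dominated_convergence (fun _ => M) hmeas
      (integrable_const M) hbound hlim
  -- U₁ (s n) tendsto the improved value
  have hcU : Filter.Tendsto (fun n => c₁ (s n)) Filter.atTop (nhds (c₁ t)) :=
    (hc₁.tendsto t).comp hst
  have hUtend : Filter.Tendsto (fun n => U₁ (s n)) Filter.atTop
      (nhds ((∫ y, g y ∂μ₂) - c₁ t)) := by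
    have : (fun n => U₁ (s n)) = fun n => (∫ y, F n y ∂μ₂) - c₁ (s n) := by
      funext n; rw [hU₁ (s n)]
    rw [this]
    exact hkey.sub hcU
  -- but U₁ (s n) ≤ U₁ t always
  have hle : ∀ n, U₁ (s n) ≤ U₁ t := by
    intro n
    exact hbr₁ t h1 (s n) (by simp only [hs]; linarith [hspos n])
  have hlim_le : (∫ y, g y ∂μ₂) - c₁ t ≤ U₁ t :=
    le_of_tendsto hUtend (Filter.Eventually.of_forall hle)
  have hUt : U₁ t = (∫ y, f y ∂μ₂) - c₁ t := hU₁ t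
  have hvm : 0 < v₁ t t * m := mul_pos (hv₁d t ht) hmpos
  rw [hUt, hgint] at hlim_le
  linarith
end
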